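/- arXiv:1907.07716 — 2 statements merged into one kernel-verified Lean document; each statement's English description precedes it below -/
import Mathlib

section
/- Let Q be a finite connected non-simple quandle. The following are equivalent: (i) Q is locally strictly simple; (ii) for every congruence α of Q with 0_Q ≠ α ≠ 1_Q, the quotient Q/α and every block [a]_α are strictly simple quandles; (iii) there exists a congruence α of Q with 0_Q ≠ α ≠ 1_Q such that Q/α and every block [a]_α are strictly simple quandles. -/
/-!  Basic theory of quandles: structures, subquandles, congruences,
quotients, displacement groups, affine and principal quandles. -/

universe u v

/-- A quandle structure on a set `Q`: a binary operation whose left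
translations are bijective, which is left self-distributive and idempotent. -/
structure QuandleStruct (Q : Type*) where
  act : Q → Q → Q
  act_bijective : ∀ a, Function.Bijective (act a)
  self_distrib : ∀ a b c, act a (act b c) = act (act a b) (act a c)
  act_idem : ∀ a, act a a = a

namespace QuandleStruct

variable {Q : Type*} {R : Type*}

/-- The left translation `L_a` as a permutation of `Q`. -/
noncomputable def L (S : QuandleStruct Q) (a : Q) : Equiv.Perm Q :=
  Equiv.ofBijective (S.act a) (S.act_bijective a)

@[simp] lemma L_apply (S : QuandleStruct Q) (a b : Q) : S.L a b = S.act a b := rfl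

/-- Left division `a \ b`. -/
noncomputable def ldiv (S : QuandleStruct Q) (a b : Q) : Q := (S.L a).symm b

@[simp] lemma ldiv_act (S : QuandleStruct Q) (a b : Q) : S.ldiv a (S.act a b) = b :=
  (S.L a).symm_apply_apply b

@[simp] lemma act_ldiv (S : QuandleStruct Q) (a b : Q) : S.act a (S.ldiv a b) = b :=
  (S.L a).apply_symm_apply b

/-- The displacement group `Dis(Q)`, generated by all `L_a ∘ L_b⁻¹`. -/
def Dis (S : QuandleStruct Q) : Subgroup (Equiv.Perm Q) :=
  Subgroup.closure {g | ∃ a b, g = S.L a * (S.L b)⁻¹}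

/-- A quandle is connected if its displacement group acts transitively. -/
def Connected (S : QuandleStruct Q) : Prop := ∀ x y : Q, ∃ g ∈ S.Dis, g x = y

/-- A quandle is faithful if `a ↦ L_a` is injective. -/
def Faithful (S : QuandleStruct Q) : Prop := Function.Injective S.L

/-- A quandle is latin if all right translations are bijective. -/
def Latin (S : QuandleStruct Q) : Prop := ∀ a : Q, Function.Bijective (fun b => S.act b a)

/-- A subquandle: a nonempty subset closed under the operation and left division. -/
def IsSubquandle (S : QuandleStruct Q) (s : Set Q) : Prop :=
  s.Nonempty ∧ ∀ a ∈ s, ∀ b ∈ s, S.act a b ∈ s ∧ S.ldiv a b ∈ s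

/-- The quandle structure induced on a subquandle. -/
def restrict (S : QuandleStruct Q) (s : Set Q) (hs : S.IsSubquandle s) :
    QuandleStruct s where
  act a b := ⟨S.act a.1 b.1, (hs.2 a.1 a.2 b.1 b.2).1⟩
  act_bijective a := by
    constructor
    · intro x y h
      exact Subtype.ext ((S.act_bijective a.1).1 (congrArg Subtype.val h))
    · intro b
      refine ⟨⟨S.ldiv a.1 b.1, (hs.2 a.1 a.2 b.1 b.2).2⟩, Subtype.ext ?_⟩
      exact S.act_ldiv a.1 b.1
  self_distrib a b c := Subtype.ext (S.self_distrib a.1 b.1 c.1)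
  act_idem a := Subtype.ext (S.act_idem a.1)

/-- A quandle (with more than one element) is strictly simple if it has no
proper subquandle. -/
def StrictlySimple (S : QuandleStruct Q) : Prop :=
  Nontrivial Q ∧ ∀ s : Set Q, S.IsSubquandle s → s.Nontrivial → s = Set.univ

/-- A quandle is locally strictly simple (LSS) if every proper subquandle is
strictly simple. -/
def LSS (S : QuandleStruct Q) : Prop :=
  ∀ (s : Set Q) (hs : S.IsSubquandle s), s.Nontrivial → s ≠ Set.univ →
    StrictlySimple (S.restrict s hs)

/-- A congruence of a quandle: an equivalence relation compatible with the
operation and with left division. -/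
structure IsCongruence (S : QuandleStruct Q) (r : Q → Q → Prop) : Prop where
  equiv : Equivalence r
  act_comp : ∀ {a b c d}, r a b → r c d → r (S.act a c) (S.act b d)
  ldiv_comp : ∀ {a b c d}, r a b → r c d → r (S.ldiv a c) (S.ldiv b d)

/-- The setoid attached to a congruence. -/
def IsCongruence.setoid {S : QuandleStruct Q} {r : Q → Q → Prop}
    (hr : S.IsCongruence r) : Setoid Q := ⟨r, hr.equiv⟩

/-- The quotient quandle `Q/α`. -/
def quot (S : QuandleStruct Q) {r : Q → Q → Prop} (hr : S.IsCongruence r) :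
    QuandleStruct (Quotient hr.setoid) where
  act := Quotient.map₂ S.act fun _ _ h1 _ _ h2 => hr.act_comp h1 h2
  act_bijective := by
    intro a
    induction a using Quotient.ind with
    | _ a =>
    constructor
    · intro x y
      induction x using Quotient.ind with
      | _ x =>
      induction y using Quotient.ind with
      | _ y =>
      intro h
      have h1 : r (S.act a x) (S.act a y) := Quotient.exact h
      have h2 := hr.ldiv_comp (hr.equiv.refl a) h1
      rw [S.ldiv_act, S.ldiv_act] at h2
      exact Quotient.sound h2
    · intro b
      induction b using Quotient.ind with
      | _ b =>
      exact ⟨Quotient.mk _ (S.ldiv a b), congrArg (Quotient.mk _) (S.act_ldiv a b)⟩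
  self_distrib := by
    intro a b c
    induction a using Quotient.ind with
    | _ a =>
    induction b using Quotient.ind with
    | _ b =>
    induction c using Quotient.ind with
    | _ c =>
    exact congrArg (Quotient.mk _) (S.self_distrib a b c)
  act_idem := by
    intro a
    induction a using Quotient.ind with
    | _ a =>
    exact congrArg (Quotient.mk _) (S.act_idem a)

/-- The congruence block `[a]_α` is a subquandle. -/
lemma block_isSubquandle (S : QuandleStruct Q) {r : Q → Q → Prop}
    (hr : S.IsCongruence r) (a : Q) : S.IsSubquandle {b | r a b} := by
  refine ⟨⟨a, hr.equiv.refl a⟩, fun x hx y hy => ⟨?_, ?_⟩⟩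
  · have h := hr.act_comp hx hy
    rwa [S.act_idem] at h
  · have h := hr.ldiv_comp hx hy
    have ha : S.ldiv a a = a := by
      have h2 := S.ldiv_act a a
      rwa [S.act_idem] at h2
    rwa [ha] at h

/-- A quandle is simple if its only congruences are `0_Q` (equality) and
`1_Q` (the full relation). -/
def Simple (S : QuandleStruct Q) : Prop :=
  ∀ r : Q → Q → Prop, S.IsCongruence r →
    r = (fun a b : Q => a = b) ∨ r = (fun _ _ : Q => True)

/-- A quandle is subdirectly irreducible if the intersection of all congruences
different from `0_Q` is different from `0_Q`. -/
def SubdirectlyIrreducible (S : QuandleStruct Q) : Prop :=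
  ∃ a b : Q, a ≠ b ∧ ∀ r : Q → Q → Prop, S.IsCongruence r →
    r ≠ (fun a b : Q => a = b) → r a b

/-- Isomorphism of quandles. -/
def QIso (S : QuandleStruct Q) (T : QuandleStruct R) : Prop :=
  ∃ e : Q ≃ R, ∀ a b, e (S.act a b) = T.act (e a) (e b)

/-- The relation `σ_Q` : two elements are related iff their point stabilizers
in the displacement group coincide. -/
def sigmaRel (S : QuandleStruct Q) (a b : Q) : Prop :=
  ∀ g ∈ S.Dis, (g a = a ↔ g b = b)

/-- The displacement group relative to a relation `r`. -/
def DisRel (S : QuandleStruct Q) (r : Q → Q → Prop) : Subgroup (Equiv.Perm Q) :=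
  Subgroup.closure {g | ∃ a b, r a b ∧ g = S.L a * (S.L b)⁻¹}

/-- The direct product of two quandles. -/
def prod (S : QuandleStruct Q) (T : QuandleStruct R) : QuandleStruct (Q × R) where
  act a b := (S.act a.1 b.1, T.act a.2 b.2)
  act_bijective a := by
    show Function.Bijective (Prod.map (S.act a.1) (T.act a.2))
    exact (S.act_bijective a.1).prodMap (T.act_bijective a.2)
  self_distrib a b c := Prod.ext (S.self_distrib a.1 b.1 c.1) (T.self_distrib a.2 b.2 c.2)
  act_idem a := Prod.ext (S.act_idem a.1) (T.act_idem a.2)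

end QuandleStruct

/-- The affine quandle `Aff(A, f)` over an abelian group `A` with
`a * b = (1 - f)(a) + f(b)`. -/
def affineQuandle (A : Type*) [AddCommGroup A] (f : A ≃+ A) : QuandleStruct A where
  act a b := a - f a + f b
  act_bijective a := by
    show Function.Bijective ((fun x : A => a - f a + x) ∘ f)
    exact (Equiv.addLeft (a - f a)).bijective.comp f.bijective
  self_distrib a b c := by
    simp only [map_add, map_sub]
    abel
  act_idem a := by simp

/-- Data for an affine quandle: a finite abelian group together with an
automorphism. -/
structure AffineData : Type 1 where
  carrier : Type
  [grp : AddCommGroup carrier]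
  [fin : Finite carrier]
  equivAdd : carrier ≃+ carrier

attribute [instance] AffineData.grp AffineData.fin

namespace QuandleStruct

/-- A quandle is affine if it is isomorphic to `Aff(A, f)` for some finite
abelian group `A` and automorphism `f`. -/
def IsAffine {Q : Type*} (S : QuandleStruct Q) : Prop :=
  ∃ D : AffineData, S.QIso (affineQuandle D.carrier D.equivAdd)

end QuandleStruct

/-- The principal quandle `Q(G, f)` with `a * b = a f(a⁻¹ b)`. -/
def principalQuandle (G : Type*) [Group G] (f : G ≃* G) : QuandleStruct G where
  act a b := a * f (a⁻¹ * b)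
  act_bijective a := by
    show Function.Bijective ((fun x : G => a * x) ∘ (⇑f) ∘ (fun b : G => a⁻¹ * b))
    exact ((Equiv.mulLeft a).bijective.comp f.bijective).comp (Equiv.mulLeft a⁻¹).bijective
  self_distrib a b c := by
    simp only [map_mul, map_inv, mul_inv_rev, inv_inv]
    group
  act_idem a := by simp

/-- An extraspecial `q`-group: a finite `q`-group whose center, derived
subgroup and Frattini subgroup coincide and have order `q`. -/
def IsExtraspecial (q : ℕ) (G : Type*) [Group G] : Prop :=
  Finite G ∧ IsPGroup q G ∧ Subgroup.center G = commutator G ∧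
    commutator G = frattini G ∧ Nat.card (Subgroup.center G) = q

/-- A bundled group. -/
structure GroupData : Type 1 where
  carrier : Type
  [grp : Group carrier]

attribute [instance] GroupData.grp


namespace QuandleStruct

variable {Q : Type u}

lemma restrict_act_val (S : QuandleStruct Q) {s : Set Q} (hs : S.IsSubquandle s)
    (a b : s) : ((S.restrict s hs).act a b).val = S.act a.val b.val := rfl

lemma restrict_ldiv_val (S : QuandleStruct Q) {s : Set Q} (hs : S.IsSubquandle s)
    (a b : s) : ((S.restrict s hs).ldiv a b).val = S.ldiv a.val b.val := by
  apply (S.act_bijective a.val).1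
  rw [S.act_ldiv]
  have h := congrArg Subtype.val ((S.restrict s hs).act_ldiv a b)
  rw [restrict_act_val] at h
  exact h

lemma quot_act_mk (S : QuandleStruct Q) {r : Q → Q → Prop} (hr : S.IsCongruence r)
    (x y : Q) : (S.quot hr).act (Quotient.mk hr.setoid x) (Quotient.mk hr.setoid y) =
      Quotient.mk hr.setoid (S.act x y) := rfl

lemma quot_ldiv_mk (S : QuandleStruct Q) {r : Q → Q → Prop} (hr : S.IsCongruence r)
    (x y : Q) : (S.quot hr).ldiv (Quotient.mk hr.setoid x) (Quotient.mk hr.setoid y) =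
      Quotient.mk hr.setoid (S.ldiv x y) := by
  apply ((S.quot hr).act_bijective (Quotient.mk hr.setoid x)).1
  rw [(S.quot hr).act_ldiv, quot_act_mk, S.act_ldiv]

lemma ldiv_self (S : QuandleStruct Q) (a : Q) : S.ldiv a a = a := by
  have h := S.ldiv_act a a
  rwa [S.act_idem] at h

lemma dis_iff (S : QuandleStruct Q) {r : Q → Q → Prop} (hr : S.IsCongruence r) :
    ∀ g ∈ S.Dis, ∀ x y : Q, r x y ↔ r (g x) (g y) := by
  intro g hg
  induction hg using Subgroup.closure_induction with
  | mem g hg =>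
    obtain ⟨a, b, rfl⟩ := hg
    intro x y
    show r x y ↔ r (S.act a (S.ldiv b x)) (S.act a (S.ldiv b y))
    constructor
    · intro h
      exact hr.act_comp (hr.equiv.refl a) (hr.ldiv_comp (hr.equiv.refl b) h)
    · intro h
      have h1 := hr.ldiv_comp (hr.equiv.refl a) h
      rw [S.ldiv_act, S.ldiv_act] at h1
      have h2 := hr.act_comp (hr.equiv.refl b) h1
      rwa [S.act_ldiv, S.act_ldiv] at h2
  | one => intro x y; rfl
  | mul g h hg hh ihg ihh =>
    intro x y
    rw [Equiv.Perm.mul_apply, Equiv.Perm.mul_apply]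
    exact (ihh x y).trans (ihg (h x) (h y))
  | inv g hg ih =>
    intro x y
    have h2 := ih (g⁻¹ x) (g⁻¹ y)
    simp only [Equiv.Perm.coe_inv, Equiv.apply_symm_apply] at h2
    exact h2.symm

lemma exists_rel_ne (S : QuandleStruct Q) {r : Q → Q → Prop} (hr : S.IsCongruence r)
    (hne0 : r ≠ fun a b : Q => a = b) : ∃ x y : Q, r x y ∧ x ≠ y := by
  by_contra h
  push_neg at h
  apply hne0
  funext x y
  exact propext ⟨fun hxy => h x y hxy, fun hxy => hxy ▸ hr.equiv.refl x⟩

lemma exists_not_rel {r : Q → Q → Prop} (hne1 : r ≠ fun _ _ : Q => True) :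
    ∃ x y : Q, ¬ r x y := by
  by_contra h
  push_neg at h
  exact hne1 (funext fun x => funext fun y => eq_true (h x y))

lemma block_nontriv (S : QuandleStruct Q) (hconn : S.Connected) {r : Q → Q → Prop}
    (hr : S.IsCongruence r) (hne0 : r ≠ fun a b : Q => a = b) (a : Q) :
    ∃ c : Q, r a c ∧ a ≠ c := by
  obtain ⟨x, y, hxy, hne⟩ := S.exists_rel_ne hr hne0
  obtain ⟨g, hg, hgx⟩ := hconn x a
  refine ⟨g y, ?_, ?_⟩
  · rw [← hgx]; exact (S.dis_iff hr g hg x y).1 hxy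
  · rw [← hgx]; intro h; exact hne (g.injective h)

lemma block_ne_univ (S : QuandleStruct Q) {r : Q → Q → Prop} (hr : S.IsCongruence r)
    (hne1 : r ≠ fun _ _ : Q => True) (a : Q) : {b | r a b} ≠ Set.univ := by
  intro h
  apply hne1
  funext x y
  have hx : r a x := Set.eq_univ_iff_forall.mp h x
  have hy : r a y := Set.eq_univ_iff_forall.mp h y
  exact eq_true (hr.equiv.trans (hr.equiv.symm hx) hy)

/-- If a subquandle `s` contains two distinct related elements `a, b` and the
block of `a` is strictly simple, then the whole block of `a` lies in `s`. -/
lemma block_sub_of_pair (S : QuandleStruct Q) {r : Q → Q → Prop} (hr : S.IsCongruence r)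
    {a : Q}
    (hbs : (S.restrict {b | r a b} (S.block_isSubquandle hr a)).StrictlySimple)
    {s : Set Q} (hs : S.IsSubquandle s) (ha : a ∈ s) {b : Q} (hb : b ∈ s)
    (hab : r a b) (hne : a ≠ b) : {c | r a c} ⊆ s := by
  set bl : Set Q := {c | r a c} with hbl
  set t : Set ↥bl := {z | z.val ∈ s} with ht_def
  have ht : (S.restrict bl (S.block_isSubquandle hr a)).IsSubquandle t := by
    refine ⟨⟨⟨a, hr.equiv.refl a⟩, ha⟩, ?_⟩
    intro u hu v hv
    refine ⟨(hs.2 u.val hu v.val hv).1, ?_⟩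
    show ((S.restrict bl (S.block_isSubquandle hr a)).ldiv u v).val ∈ s
    rw [S.restrict_ldiv_val]
    exact (hs.2 u.val hu v.val hv).2
  have htnt : t.Nontrivial := by
    refine ⟨⟨a, hr.equiv.refl a⟩, ha, ⟨b, hab⟩, hb, ?_⟩
    intro h
    exact hne (congrArg Subtype.val h)
  have huniv := hbs.2 t ht htnt
  intro c hc
  have : (⟨c, hc⟩ : ↥bl) ∈ t := by rw [huniv]; trivial
  exact this

end QuandleStruct

/-- For a finite connected non-simple quandle `Q`, TFAE:
(i) `Q` is LSS; (ii) for every proper congruence both the quotient and all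
blocks are strictly simple; (iii) there is a proper congruence whose quotient
and blocks are strictly simple. -/

theorem statement8 {Q : Type u} [Finite Q] (S : QuandleStruct Q)
    (hconn : S.Connected) (hns : ¬ S.Simple) :
    (S.LSS ↔
      ∀ (r : Q → Q → Prop) (hr : S.IsCongruence r),
        r ≠ (fun a b : Q => a = b) → r ≠ (fun _ _ : Q => True) →
        (S.quot hr).StrictlySimple ∧
        ∀ a : Q, (S.restrict {b | r a b} (S.block_isSubquandle hr a)).StrictlySimple) ∧
    (S.LSS ↔
      ∃ (r : Q → Q → Prop) (hr : S.IsCongruence r),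
        r ≠ (fun a b : Q => a = b) ∧ r ≠ (fun _ _ : Q => True) ∧
        (S.quot hr).StrictlySimple ∧
        ∀ a : Q, (S.restrict {b | r a b} (S.block_isSubquandle hr a)).StrictlySimple) := by
  -- (i) → (ii)
  have h12 : S.LSS →
      ∀ (r : Q → Q → Prop) (hr : S.IsCongruence r),
        r ≠ (fun a b : Q => a = b) → r ≠ (fun _ _ : Q => True) →
        (S.quot hr).StrictlySimple ∧
        ∀ a : Q, (S.restrict {b | r a b} (S.block_isSubquandle hr a)).StrictlySimple := by
    intro hLSS r hr hne0 hne1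
    have hblocks : ∀ a : Q,
        (S.restrict {b | r a b} (S.block_isSubquandle hr a)).StrictlySimple := by
      intro a
      obtain ⟨c, hac, hcne⟩ := S.block_nontriv hconn hr hne0 a
      have hnt : ({b | r a b} : Set Q).Nontrivial :=
        ⟨a, hr.equiv.refl a, c, hac, hcne⟩
      exact hLSS _ (S.block_isSubquandle hr a) hnt (S.block_ne_univ hr hne1 a)
    refine ⟨?_, hblocks⟩
    -- quotient is strictly simple
    obtain ⟨x0, y0, hnr0⟩ := QuandleStruct.exists_not_rel hne1
    refine ⟨⟨Quotient.mk hr.setoid x0, Quotient.mk hr.setoid y0,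
        fun h => hnr0 (Quotient.exact h)⟩, ?_⟩
    intro T hT hTnt
    by_contra hTne
    set s : Set Q := {x | Quotient.mk hr.setoid x ∈ T} with hs_def
    have hssub : S.IsSubquandle s := by
      constructor
      · obtain ⟨q, hq⟩ := hT.1
        obtain ⟨x, rfl⟩ := Quotient.exists_rep q
        exact ⟨x, hq⟩
      · intro a ha b hb
        constructor
        · show Quotient.mk hr.setoid (S.act a b) ∈ T
          rw [← S.quot_act_mk hr]
          exact (hT.2 _ ha _ hb).1
        · show Quotient.mk hr.setoid (S.ldiv a b) ∈ T
          rw [← S.quot_ldiv_mk hr]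
          exact (hT.2 _ ha _ hb).2
    obtain ⟨u, hu, v, hv, huv⟩ := hTnt
    obtain ⟨x, rfl⟩ := Quotient.exists_rep u
    obtain ⟨y, rfl⟩ := Quotient.exists_rep v
    have hxs : x ∈ s := hu
    have hys : y ∈ s := hv
    have hsnt : s.Nontrivial :=
      ⟨x, hxs, y, hys, fun h => huv (congrArg (Quotient.mk hr.setoid) h)⟩
    have hsnu : s ≠ Set.univ := by
      intro h
      apply hTne
      apply Set.eq_univ_iff_forall.mpr
      intro q
      obtain ⟨z, rfl⟩ := Quotient.exists_rep q
      exact Set.eq_univ_iff_forall.mp h z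
    have hss := hLSS s hssub hsnt hsnu
    -- block of x inside s
    have hblocksub : {b | r x b} ⊆ s := by
      intro b hb
      show Quotient.mk hr.setoid b ∈ T
      have : Quotient.mk hr.setoid x = Quotient.mk hr.setoid b := Quotient.sound hb
      rw [← this]; exact hxs
    set t : Set ↥s := {z | r x z.val} with ht_def
    have ht : (S.restrict s hssub).IsSubquandle t := by
      refine ⟨⟨⟨x, hxs⟩, hr.equiv.refl x⟩, ?_⟩
      intro u1 hu1 v1 hv1
      constructor
      · show r x ((S.restrict s hssub).act u1 v1).val
        rw [S.restrict_act_val]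
        have h := hr.act_comp hu1 hv1
        rwa [S.act_idem] at h
      · show r x ((S.restrict s hssub).ldiv u1 v1).val
        rw [S.restrict_ldiv_val]
        have h := hr.ldiv_comp hu1 hv1
        rwa [S.ldiv_self] at h
    have htnt : t.Nontrivial := by
      obtain ⟨c, hxc, hcne⟩ := S.block_nontriv hconn hr hne0 x
      refine ⟨⟨x, hxs⟩, hr.equiv.refl x, ⟨c, hblocksub hxc⟩, hxc, ?_⟩
      intro h
      exact hcne (congrArg Subtype.val h)
    have huniv := hss.2 t ht htnt
    have hyt : (⟨y, hys⟩ : ↥s) ∈ t := by rw [huniv]; trivial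
    exact huv (Quotient.sound hyt)
  -- (ii) → (iii)
  have h23 : (∀ (r : Q → Q → Prop) (hr : S.IsCongruence r),
        r ≠ (fun a b : Q => a = b) → r ≠ (fun _ _ : Q => True) →
        (S.quot hr).StrictlySimple ∧
        ∀ a : Q, (S.restrict {b | r a b} (S.block_isSubquandle hr a)).StrictlySimple) →
      (∃ (r : Q → Q → Prop) (hr : S.IsCongruence r),
        r ≠ (fun a b : Q => a = b) ∧ r ≠ (fun _ _ : Q => True) ∧
        (S.quot hr).StrictlySimple ∧
        ∀ a : Q, (S.restrict {b | r a b} (S.block_isSubquandle hr a)).StrictlySimple) := by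
    intro h
    unfold QuandleStruct.Simple at hns
    push_neg at hns
    obtain ⟨r, hr, hne⟩ := hns
    obtain ⟨hne0, hne1⟩ := hne
    exact ⟨r, hr, hne0, hne1, h r hr hne0 hne1⟩
  -- (iii) → (i)
  have h31 : (∃ (r : Q → Q → Prop) (hr : S.IsCongruence r),
        r ≠ (fun a b : Q => a = b) ∧ r ≠ (fun _ _ : Q => True) ∧
        (S.quot hr).StrictlySimple ∧
        ∀ a : Q, (S.restrict {b | r a b} (S.block_isSubquandle hr a)).StrictlySimple) →
      S.LSS := by
    rintro ⟨r, hr, hne0, hne1, hqss, hbss⟩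
    intro s hs hsnt hsnu
    by_cases hcase : ∀ x ∈ s, ∀ y ∈ s, r x y
    · -- Case A: s is contained in a single block, hence equals it
      obtain ⟨x, hx, y, hy, hxy⟩ := hsnt
      have hrxy : r x y := hcase x hx y hy
      have key : {c | r x c} ⊆ s :=
        S.block_sub_of_pair hr (hbss x) hs hx hy hrxy hxy
      have hsub : s ⊆ {c | r x c} := fun z hz => hcase x hx z hz
      have hseq : s = {c | r x c} := Set.Subset.antisymm hsub key
      subst hseq
      exact hbss x
    · push_neg at hcase
      obtain ⟨x0, hx0, y0, hy0, hnr⟩ := hcase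
      -- image of s in the quotient is everything
      set T : Set (Quotient hr.setoid) :=
        {q | ∃ x ∈ s, Quotient.mk hr.setoid x = q} with hT_def
      have hT : (S.quot hr).IsSubquandle T := by
        constructor
        · exact ⟨_, x0, hx0, rfl⟩
        · rintro q1 ⟨a, ha, rfl⟩ q2 ⟨b, hb, rfl⟩
          constructor
          · rw [S.quot_act_mk hr]
            exact ⟨_, (hs.2 a ha b hb).1, rfl⟩
          · rw [S.quot_ldiv_mk hr]
            exact ⟨_, (hs.2 a ha b hb).2, rfl⟩
      have hTnt : T.Nontrivial :=
        ⟨_, ⟨x0, hx0, rfl⟩, _, ⟨y0, hy0, rfl⟩, fun h => hnr (Quotient.exact h)⟩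
      have hTuniv : T = Set.univ := hqss.2 T hT hTnt
      have hsur : ∀ q : Q, ∃ x ∈ s, r x q := by
        intro q
        have hq : (Quotient.mk hr.setoid q) ∈ T := by rw [hTuniv]; trivial
        obtain ⟨x, hxs, hxq⟩ := hq
        exact ⟨x, hxs, Quotient.exact hxq⟩
      by_cases hinj : ∀ x ∈ s, ∀ y ∈ s, r x y → x = y
      · -- Case B1: s is a transversal, isomorphic to the quotient
        constructor
        · refine ⟨⟨x0, hx0⟩, ⟨y0, hy0⟩, ?_⟩
          intro h
          have h' : x0 = y0 := congrArg Subtype.val h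
          exact hnr (h' ▸ hr.equiv.refl x0)
        · intro t ht htnt
          set T' : Set (Quotient hr.setoid) :=
            {q | ∃ z ∈ t, Quotient.mk hr.setoid (z : ↥s).val = q} with hT'_def
          have hT' : (S.quot hr).IsSubquandle T' := by
            constructor
            · obtain ⟨z, hz⟩ := ht.1
              exact ⟨_, z, hz, rfl⟩
            · rintro q1 ⟨z1, hz1, rfl⟩ q2 ⟨z2, hz2, rfl⟩
              constructor
              · rw [S.quot_act_mk hr]
                exact ⟨_, (ht.2 z1 hz1 z2 hz2).1, rfl⟩
              · rw [S.quot_ldiv_mk hr]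
                refine ⟨_, (ht.2 z1 hz1 z2 hz2).2, ?_⟩
                rw [S.restrict_ldiv_val]
          have hT'nt : T'.Nontrivial := by
            obtain ⟨z1, hz1, z2, hz2, hz12⟩ := htnt
            refine ⟨_, ⟨z1, hz1, rfl⟩, _, ⟨z2, hz2, rfl⟩, ?_⟩
            intro h
            exact hz12 (Subtype.ext (hinj z1.val z1.2 z2.val z2.2 (Quotient.exact h)))
          have hT'univ := hqss.2 T' hT' hT'nt
          apply Set.eq_univ_iff_forall.mpr
          intro z
          have hz : (Quotient.mk hr.setoid z.val) ∈ T' := by rw [hT'univ]; trivial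
          obtain ⟨w, hw, hwz⟩ := hz
          have hwzv : w.val = z.val := hinj w.val w.2 z.val z.2 (Quotient.exact hwz)
          exact Subtype.ext hwzv ▸ hw
      · -- Case B2: s contains a whole block, hence s = univ, contradiction
        exfalso
        push_neg at hinj
        obtain ⟨a, has, b, hbs, hab, hne_ab⟩ := hinj
        apply hsnu
        set B : Set Q := {x | ∀ c, r x c → c ∈ s} with hB_def
        have hsat : ∀ {x y : Q}, r x y → x ∈ B → y ∈ B := by
          intro x y hxy hx c hc
          exact hx c (hr.equiv.trans hxy hc)
        have haB : a ∈ B := fun c hc =>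
          S.block_sub_of_pair hr (hbss a) hs has hbs hab hne_ab hc
        have hact_s : ∀ u ∈ s, ∀ x ∈ B, S.act u x ∈ B := by
          intro u hu x hx c hc
          have h1 := hr.ldiv_comp (hr.equiv.refl u) hc
          rw [S.ldiv_act] at h1
          have h2 : S.ldiv u c ∈ s := hx _ h1
          have h3 := (hs.2 u hu (S.ldiv u c) h2).1
          rwa [S.act_ldiv] at h3
        have hldiv_s : ∀ u ∈ s, ∀ x ∈ B, S.ldiv u x ∈ B := by
          intro u hu x hx c hc
          have h1 := hr.act_comp (hr.equiv.refl u) hc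
          rw [S.act_ldiv] at h1
          have h2 : S.act u c ∈ s := hx _ h1
          have h3 := (hs.2 u hu (S.act u c) h2).2
          rwa [S.ldiv_act] at h3
        have hact : ∀ u : Q, ∀ x ∈ B, S.act u x ∈ B := by
          intro u x hx
          obtain ⟨v, hv, hvu⟩ := hsur u
          exact hsat (hr.act_comp hvu (hr.equiv.refl x)) (hact_s v hv x hx)
        have hldiv : ∀ u : Q, ∀ x ∈ B, S.ldiv u x ∈ B := by
          intro u x hx
          obtain ⟨v, hv, hvu⟩ := hsur u
          exact hsat (hr.ldiv_comp hvu (hr.equiv.refl x)) (hldiv_s v hv x hx)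
        have hdis : ∀ g ∈ S.Dis, ∀ x, x ∈ B ↔ g x ∈ B := by
          intro g hg
          induction hg using Subgroup.closure_induction with
          | mem g hg =>
            obtain ⟨u, v, rfl⟩ := hg
            intro x
            show x ∈ B ↔ S.act u (S.ldiv v x) ∈ B
            constructor
            · intro hx
              exact hact u _ (hldiv v x hx)
            · intro hx
              have h1 := hldiv u _ hx
              rw [S.ldiv_act] at h1
              have h2 := hact v _ h1
              rwa [S.act_ldiv] at h2
          | one => intro x; rfl
          | mul g h hg hh ihg ihh =>
            intro x
            rw [Equiv.Perm.mul_apply]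
            exact (ihh x).trans (ihg (h x))
          | inv g hg ih =>
            intro x
            have h2 := ih (g⁻¹ x)
            simp only [Equiv.Perm.coe_inv, Equiv.apply_symm_apply] at h2
            exact h2.symm
        apply Set.eq_univ_iff_forall.mpr
        intro y
        obtain ⟨g, hg, hga⟩ := hconn a y
        have hyB : y ∈ B := hga ▸ (hdis g hg a).1 haB
        exact hyB y (hr.equiv.refl y)
  exact ⟨⟨h12, fun h => h31 (h23 h)⟩, ⟨fun h => h23 (h12 h), h31⟩⟩
end

section
/- Let p be a prime and let Q = Aff(A, f) be a finite connected affine quandle that is non-simple, subdirectly irreducible and locally strictly simple, where A is an abelian p-group of exponent p². Then A is isomorphic to (Z_{p²})^n for some n, and the quotient of Q by its unique congruence α with 0_Q ≠ α ≠ 1_Q is isomorphic as a quandle to each block [a]_α. -/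
/-!  Basic theory of quandles: structures, subquandles, congruences,
quotients, displacement groups, affine and principal quandles. -/

universe u v

lemma exists_nat_indep_family (p : ℕ) (hp : p.Prime) (P : Type u) [AddCommGroup P]
    [Finite P] [Module (ZMod p) P] :
    ∃ (n : ℕ) (c : Fin n → P), Nat.card P = p ^ n ∧
      ∀ (m : Fin n → ℕ), (∑ j, m j • c j) = 0 → ∀ j, p ∣ m j := by
  haveI : NeZero p := ⟨hp.ne_zero⟩
  haveI : Fact p.Prime := ⟨hp⟩
  haveI : Module.Finite (ZMod p) P := Module.Finite.of_finite
  let n := Module.finrank (ZMod p) P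
  let b : Module.Basis (Fin n) (ZMod p) P := Module.finBasis (ZMod p) P
  letI : Fintype P := Fintype.ofFinite P
  refine ⟨n, b, ?_, ?_⟩
  · rw [Nat.card_eq_fintype_card, Module.card_fintype b, ZMod.card, Fintype.card_fin]
  · intro m hm j
    have hm2 : (∑ j, ((m j : ZMod p)) • b j : P) = 0 := by
      simpa only [Nat.cast_smul_eq_nsmul] using hm
    have := Fintype.linearIndependent_iff.mp b.linearIndependent (fun j => (m j : ZMod p)) hm2 j
    exact (ZMod.natCast_eq_zero_iff _ _).mp this

lemma homocyclic_aux {p : ℕ} (hp : p.Prime) {A : Type u} [AddCommGroup A] [Finite A]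
    (hexp : ∀ a : A, p ^ 2 • a = 0)
    (hpA : ∀ a : A, p • a = 0 → ∃ b : A, p • b = a) :
    ∃ n : ℕ, Nonempty (A ≃+ (Fin n → ZMod (p ^ 2))) := by
  haveI : NeZero p := ⟨hp.ne_zero⟩
  haveI : NeZero (p ^ 2) := ⟨pow_ne_zero 2 hp.ne_zero⟩
  haveI : Fact p.Prime := ⟨hp⟩
  -- the p-torsion subgroup
  let ψ : A →+ A := AddMonoidHom.mk' (fun a => p • a) (fun a b => smul_add p a b)
  let P : AddSubgroup A := ψ.ker
  haveI : Finite P := by infer_instance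
  letI mP : Module (ZMod p) P := AddCommGroup.zmodModule (by
    rintro ⟨x, hx⟩
    ext
    simpa [P, ψ, AddMonoidHom.mem_ker] using hx)
  obtain ⟨n, c, hcardP, hindP⟩ := @exists_nat_indep_family p hp ↥P _ _ mP
  -- independence transferred to `A`
  have hind : ∀ (m : Fin n → ℕ), (∑ j, m j • (c j : A)) = 0 → ∀ j, p ∣ m j := by
    intro m hm
    refine hindP m ?_
    apply Subtype.ext
    push_cast
    simpa using hm
  -- range of ψ equals P
  have hrange : ψ.range = P := by
    ext x
    constructor
    · rintro ⟨y, rfl⟩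
      show p • (p • y) = 0
      rw [smul_smul, ← pow_two, hexp]
    · intro hx
      obtain ⟨y, hy⟩ := hpA x hx
      exact ⟨y, hy⟩
  letI : Fintype A := Fintype.ofFinite A
  have hcardA : Nat.card A = p ^ n * p ^ n := by
    have h1 := AddSubgroup.card_eq_card_quotient_mul_card_addSubgroup (ψ.ker : AddSubgroup A)
    have h2 : Nat.card (A ⧸ ψ.ker) = Nat.card ψ.range :=
      Nat.card_congr (QuotientAddGroup.quotientKerEquivRange ψ).toEquiv
    rw [h2, hrange, hcardP] at h1
    rw [h1]
  -- lift the family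
  have hlift : ∀ j : Fin n, ∃ x : A, p • x = (c j : A) := fun j => hpA _ (c j).2
  choose aa haa using hlift
  -- the candidate map, using natural-number scalars via `ZMod.val`
  let Φ : (Fin n → ZMod (p ^ 2)) →+ A :=
    AddMonoidHom.mk' (fun v => ∑ j, (v j).val • aa j) (by
      intro v w
      rw [← Finset.sum_add_distrib]
      refine Finset.sum_congr rfl fun j _ => ?_
      have h0 : ((v + w) j).val = ((v j).val + (w j).val) % p ^ 2 := ZMod.val_add _ _
      rw [h0, ← nsmul_eq_mod_nsmul _ (hexp (aa j)), add_nsmul])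
  have hinj : Function.Injective Φ := by
    rw [injective_iff_map_eq_zero]
    intro v hv
    have hv' : (∑ j, (v j).val • aa j) = 0 := hv
    -- multiply by p
    have h1 : (∑ j, (v j).val • (c j : A)) = 0 := by
      have hps := congrArg (fun z => p • z) hv'
      simp only [smul_zero, Finset.smul_sum] at hps
      calc (∑ j, (v j).val • (c j : A)) = ∑ j, p • (v j).val • aa j := by
            refine Finset.sum_congr rfl fun j _ => ?_
            rw [smul_smul, mul_comm, ← smul_smul, haa]
        _ = 0 := hps
    have hdvd := hind _ h1
    choose m hm using fun j => hdvd j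
    have h2 : (∑ j, m j • (c j : A)) = 0 := by
      calc (∑ j, m j • (c j : A)) = ∑ j, (v j).val • aa j := by
            refine Finset.sum_congr rfl fun j _ => ?_
            rw [← haa j, smul_smul, mul_comm, ← hm j]
        _ = 0 := hv'
    have hdvd2 := hind _ h2
    funext j
    have hlt : (v j).val < p ^ 2 := ZMod.val_lt _
    have hmlt : m j < p := by
      by_contra hge
      push_neg at hge
      have hle : p * p ≤ p * m j := Nat.mul_le_mul_left p hge
      rw [← hm j] at hle
      have hlt' : (v j).val < p * p := by rw [← pow_two p]; exact hlt
      omega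
    have hmj : m j = 0 := Nat.eq_zero_of_dvd_of_lt (hdvd2 j) hmlt
    have hv0 : (v j).val = 0 := by rw [hm j, hmj, Nat.mul_zero]
    exact (ZMod.val_eq_zero _).mp hv0
  have hbij : Function.Bijective Φ := by
    rw [Fintype.bijective_iff_injective_and_card]
    refine ⟨hinj, ?_⟩
    rw [Fintype.card_pi, ← Nat.card_eq_fintype_card (α := A), hcardA]
    simp only [ZMod.card, Finset.prod_const, Finset.card_univ, Fintype.card_fin]
    ring
  exact ⟨n, ⟨(AddEquiv.ofBijective Φ hbij).symm⟩⟩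

section Auxiliary

/-- Left division in an affine quandle, explicitly. -/
lemma aff_ldiv {A : Type u} [AddCommGroup A] (f : A ≃+ A) (a b : A) :
    (affineQuandle A f).ldiv a b = f.symm b - f.symm a + a := by
  apply ((affineQuandle A f).act_bijective a).1
  rw [(affineQuandle A f).act_ldiv]
  show b = a - f a + f (f.symm b - f.symm a + a)
  rw [map_add, map_sub, f.apply_symm_apply, f.apply_symm_apply]
  abel

lemma restrict_ldiv_val {Q : Type v} (S : QuandleStruct Q) {s : Set Q} (hs : S.IsSubquandle s)
    (a b : ↥s) : (((S.restrict s hs).ldiv a b) : Q) = S.ldiv a.1 b.1 := by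
  have h1 : S.act a.1 (((S.restrict s hs).ldiv a b) : Q) = b.1 :=
    congrArg Subtype.val ((S.restrict s hs).act_ldiv a b)
  have h2 : S.act a.1 (S.ldiv a.1 b.1) = b.1 := S.act_ldiv a.1 b.1
  exact (S.act_bijective a.1).1 (h1.trans h2.symm)

/-- If the restriction of `S` to `s` is strictly simple and `u ⊆ s` is a nontrivial
subquandle, then `s ⊆ u`. -/
lemma subset_of_strictlySimple {Q : Type v} (S : QuandleStruct Q) {s u : Set Q}
    (hs : S.IsSubquandle s) (hss : QuandleStruct.StrictlySimple (S.restrict s hs))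
    (hu : S.IsSubquandle u) (hus : u ⊆ s) (hnt : u.Nontrivial) : s ⊆ u := by
  set t : Set ↥s := {x | x.1 ∈ u} with ht
  have hsub : (S.restrict s hs).IsSubquandle t := by
    obtain ⟨x, hx⟩ := hu.1
    refine ⟨⟨⟨x, hus hx⟩, hx⟩, ?_⟩
    rintro a ha b hb
    refine ⟨(hu.2 a.1 ha b.1 hb).1, ?_⟩
    show (((S.restrict s hs).ldiv a b) : Q) ∈ u
    rw [restrict_ldiv_val]
    exact (hu.2 a.1 ha b.1 hb).2
  have hnt' : t.Nontrivial := by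
    obtain ⟨x, hx, y, hy, hxy⟩ := hnt
    exact ⟨⟨x, hus hx⟩, hx, ⟨y, hus hy⟩, hy, fun h => hxy (congrArg Subtype.val h)⟩
  have huniv := hss.2 t hsub hnt'
  intro z hz
  have hmem : (⟨z, hz⟩ : ↥s) ∈ t := by rw [huniv]; trivial
  exact hmem

end Auxiliary

/-- Let `Q = Aff(A, f)` be a finite connected affine quandle
which is non-simple, subdirectly irreducible and LSS, where `A` is an abelian
`p`-group of exponent `p²`. Then `A ≅ (Z_{p²})^n` and the quotient by the
unique proper congruence is isomorphic to each block. -/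
theorem statement12 {p : ℕ} (hp : p.Prime) {A : Type u} [AddCommGroup A]
    [Finite A] (f : A ≃+ A) (hpgrp : IsPGroup p (Multiplicative A))
    (hexp : AddMonoid.exponent A = p ^ 2)
    (hconn : (affineQuandle A f).Connected)
    (hns : ¬ (affineQuandle A f).Simple)
    (hsi : (affineQuandle A f).SubdirectlyIrreducible)
    (hlss : (affineQuandle A f).LSS) :
    (∃ n : ℕ, Nonempty (A ≃+ (Fin n → ZMod (p ^ 2)))) ∧
    ∀ (r : A → A → Prop) (hr : (affineQuandle A f).IsCongruence r),
      r ≠ (fun a b : A => a = b) → r ≠ (fun _ _ : A => True) →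
      ∀ a : A, ((affineQuandle A f).quot hr).QIso
        ((affineQuandle A f).restrict {b | r a b}
          ((affineQuandle A f).block_isSubquandle hr a)) := by
  classical
  set S := affineQuandle A f with hSdef
  have hact : ∀ a b : A, S.act a b = a - f a + f b := fun _ _ => rfl
  -- exponent facts
  have hp2 : ∀ a : A, p ^ 2 • a = 0 := fun a => by
    rw [← hexp]; exact AddMonoid.exponent_nsmul_eq_zero a
  obtain ⟨a0, ha0⟩ : ∃ a0 : A, addOrderOf a0 = p ^ 2 :=
    AddMonoid.exists_addOrderOf_eq_exponent AddMonoid.ExponentExists.of_finite |>.imp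
      (fun _ h => h.trans hexp)
  have hpa0 : p • a0 ≠ 0 := by
    intro h
    have hdvd := addOrderOf_dvd_of_nsmul_eq_zero h
    rw [ha0] at hdvd
    have hle := Nat.le_of_dvd hp.pos hdvd
    have h2 := hp.two_le
    have : p * p ≤ p := by rw [← pow_two]; exact hle
    nlinarith
  -- the displacement group consists of translations
  let H : Subgroup (Equiv.Perm A) :=
    { carrier := {g | ∃ c, (∃ x, x - f x = c) ∧ ∀ z, g z = z + c}
      mul_mem' := by
        rintro g h ⟨c, ⟨x, hx⟩, hg⟩ ⟨d, ⟨y, hy⟩, hh⟩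
        refine ⟨d + c, ⟨y + x, ?_⟩, fun z => ?_⟩
        · rw [map_add, ← hx, ← hy]; abel
        · show g (h z) = z + (d + c)
          rw [hh, hg]; abel
      one_mem' := ⟨0, ⟨0, by simp⟩, fun z => by simp⟩
      inv_mem' := by
        rintro g ⟨c, ⟨x, hx⟩, hg⟩
        refine ⟨-c, ⟨-x, by rw [map_neg, ← hx]; abel⟩, fun z => ?_⟩
        have hz : g (z + -c) = z := by rw [hg]; abel
        calc g⁻¹ z = g⁻¹ (g (z + -c)) := by rw [hz]
          _ = z + -c := g.symm_apply_apply _ }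
  have hgen : {g | ∃ a b, g = S.L a * (S.L b)⁻¹} ⊆ H := by
    rintro g ⟨a, b, rfl⟩
    refine ⟨(a - f a) - (b - f b), ⟨a - b, by rw [map_sub]; abel⟩, fun z => ?_⟩
    show (S.L a) ((S.L b)⁻¹ z) = _
    have hinv : ((S.L b)⁻¹ : Equiv.Perm A) z = S.ldiv b z := rfl
    rw [hinv, aff_ldiv]
    show S.act a (f.symm z - f.symm b + b) = _
    rw [hact]
    rw [map_add, map_sub, f.apply_symm_apply, f.apply_symm_apply]
    abel
  have hDisH : S.Dis ≤ H := (Subgroup.closure_le H).mpr hgen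
  have tsurj : ∀ y : A, ∃ x : A, x - f x = y := by
    intro y
    obtain ⟨g, hg, hg0⟩ := hconn 0 y
    obtain ⟨c, ⟨x, hx⟩, hgz⟩ := hDisH hg
    refine ⟨x, ?_⟩
    rw [hx, ← hg0, hgz 0, zero_add]
  -- congruences are translation-invariant
  have htrans : ∀ (r : A → A → Prop), S.IsCongruence r →
      ∀ (c x y : A), r x y → r (x + c) (y + c) := by
    intro r hr c x y hxy
    obtain ⟨d, hd⟩ := tsurj (f c)
    have h1 : r (S.act d x) (S.act d y) := hr.act_comp (hr.equiv.refl d) hxy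
    have h2 := hr.ldiv_comp (hr.equiv.refl 0) h1
    have key : ∀ z : A, S.ldiv 0 (S.act d z) = z + c := by
      intro z
      rw [aff_ldiv]
      rw [map_zero, sub_zero, add_zero]
      apply f.injective
      rw [f.apply_symm_apply, hact, map_add]
      have : d - f d = f c := hd
      rw [show d - f d + f z = (d - f d) + f z from rfl, this]
      abel
    rw [key x, key y] at h2
    exact h2
  -- the two canonical subquandles
  set P1 : Set A := {x | p • x = 0} with hP1def
  set P2 : Set A := {x | ∃ y, p • y = x} with hP2def
  have hsmulf : ∀ (x : A), p • f x = f (p • x) := fun x => (map_nsmul f p x).symm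
  have hsmulfs : ∀ (x : A), p • f.symm x = f.symm (p • x) := fun x =>
    (map_nsmul f.symm p x).symm
  have hP1sub : S.IsSubquandle P1 := by
    refine ⟨⟨0, by simp [hP1def]⟩, ?_⟩
    rintro a ha b hb
    constructor
    · show p • (S.act a b) = 0
      rw [hact, smul_add, smul_sub, hsmulf, hsmulf, ha, hb]
      simp
    · show S.ldiv a b ∈ P1
      rw [aff_ldiv]
      show p • (f.symm b - f.symm a + a) = 0
      rw [smul_add, smul_sub, hsmulfs, hsmulfs, ha, hb]
      simp
  have hP2sub : S.IsSubquandle P2 := by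
    refine ⟨⟨0, ⟨0, by simp⟩⟩, ?_⟩
    rintro a ⟨x, hx⟩ b ⟨y, hy⟩
    constructor
    · refine ⟨x - f x + f y, ?_⟩
      show p • (x - f x + f y) = S.act a b
      rw [hact, smul_add, smul_sub, hsmulf, hsmulf, hx, hy]
    · rw [aff_ldiv]
      refine ⟨f.symm y - f.symm x + x, ?_⟩
      show p • (f.symm y - f.symm x + x) = f.symm b - f.symm a + a
      rw [smul_add, smul_sub, hsmulfs, hsmulfs, hx, hy]
  have hP21 : P2 ⊆ P1 := by
    rintro z ⟨y, rfl⟩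
    show p • p • y = 0
    rw [smul_smul, ← pow_two]
    exact hp2 y
  have hpa0P1 : p • a0 ∈ P1 := hP21 ⟨a0, rfl⟩
  have hP1nt : P1.Nontrivial := ⟨p • a0, hpa0P1, 0, by simp [hP1def], hpa0⟩
  have hP1ne : P1 ≠ Set.univ := by
    intro h
    exact hpa0 (by have : a0 ∈ P1 := h ▸ Set.mem_univ a0; exact this)
  have hss1 := hlss P1 hP1sub hP1nt hP1ne
  have hP2nt : P2.Nontrivial := ⟨p • a0, ⟨a0, rfl⟩, 0, ⟨0, smul_zero p⟩, hpa0⟩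
  have hP12 : P1 ⊆ P2 := subset_of_strictlySimple S hP1sub hss1 hP2sub hP21 hP2nt
  constructor
  · exact homocyclic_aux hp hp2 (fun a ha => hP12 ha)
  -- part 2
  intro r hr hne hnf a
  set N : Set A := {z | r z 0} with hNdef
  have hN0 : (0 : A) ∈ N := hr.equiv.refl 0
  have hrN : ∀ x y : A, r x y ↔ (x - y) ∈ N := by
    intro x y
    constructor
    · intro h
      have h2 := htrans r hr (-y) x y h
      show r (x - y) 0
      rw [show x - y = x + -y by abel, show (0 : A) = y + -y by abel]
      exact h2
    · intro h
      have h2 := htrans r hr y (x - y) 0 h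
      rw [sub_add_cancel, zero_add] at h2
      exact h2
  have hNadd : ∀ x ∈ N, ∀ y ∈ N, x + y ∈ N := by
    intro x hx y hy
    have h1 := htrans r hr y x 0 hx
    rw [zero_add] at h1
    exact hr.equiv.trans h1 hy
  have hNneg : ∀ x ∈ N, -x ∈ N := by
    intro x hx
    have h1 := htrans r hr (-x) x 0 hx
    rw [zero_add] at h1
    rw [show x + -x = (0:A) by abel] at h1
    exact hr.equiv.symm h1
  have hNsmul : ∀ x ∈ N, ∀ k : ℕ, k • x ∈ N := by
    intro x hx k
    induction k with
    | zero => simpa using hN0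
    | succ k ih =>
      rw [succ_nsmul]
      exact hNadd _ ih _ hx
  have hNf : ∀ z ∈ N, f z ∈ N := by
    intro z hz
    have h := hr.act_comp (hr.equiv.refl 0) hz
    have e1 : S.act 0 z = f z := by rw [hact]; simp
    have e2 : S.act 0 0 = 0 := S.act_idem 0
    rw [e1, e2] at h
    exact h
  have hNfs : ∀ z ∈ N, f.symm z ∈ N := by
    intro z hz
    have h := hr.ldiv_comp (hr.equiv.refl 0) hz
    have e1 : S.ldiv 0 z = f.symm z := by rw [aff_ldiv]; simp
    have e2 : S.ldiv 0 0 = 0 := by rw [aff_ldiv]; simp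
    rw [e1, e2] at h
    exact h
  have hNsub : S.IsSubquandle N := by
    refine ⟨⟨0, hN0⟩, ?_⟩
    intro x hx y hy
    constructor
    · show S.act x y ∈ N
      rw [hact, sub_eq_add_neg]
      exact hNadd _ (hNadd _ hx _ (hNneg _ (hNf _ hx))) _ (hNf _ hy)
    · show S.ldiv x y ∈ N
      rw [aff_ldiv, sub_eq_add_neg]
      exact hNadd _ (hNadd _ (hNfs _ hy) _ (hNneg _ (hNfs _ hx))) _ hx
  -- N is neither trivial nor everything
  obtain ⟨z0, hz0N, hz0⟩ : ∃ z, z ∈ N ∧ z ≠ 0 := by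
    by_contra hcon
    push_neg at hcon
    apply hne
    funext x y
    apply propext
    constructor
    · intro h
      have := hcon _ ((hrN x y).mp h)
      exact sub_eq_zero.mp this
    · rintro rfl
      exact hr.equiv.refl x
  obtain ⟨w0, hw0⟩ : ∃ w, w ∉ N := by
    by_contra hcon
    push_neg at hcon
    apply hnf
    funext x y
    apply propext
    exact ⟨fun _ => trivial, fun _ => (hrN x y).mpr (hcon (x - y))⟩
  have hNnt : N.Nontrivial := ⟨z0, hz0N, 0, hN0, hz0⟩
  have hNne : N ≠ Set.univ := fun h => hw0 (h ▸ Set.mem_univ w0)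
  have hssN := hlss N hNsub hNnt hNne
  -- N ⊆ P1
  have hNP1 : N ⊆ P1 := by
    by_cases hcase : ∀ z ∈ N, p • z = 0
    · intro z hz
      exact hcase z hz
    · push_neg at hcase
      obtain ⟨z1, hz1N, hz1⟩ := hcase
      set pN : Set A := {x | ∃ z ∈ N, p • z = x} with hpNdef
      have hpNsub : S.IsSubquandle pN := by
        refine ⟨⟨0, ⟨0, hN0, smul_zero p⟩⟩, ?_⟩
        rintro x ⟨u, huN, hu⟩ y ⟨v, hvN, hv⟩
        constructor
        · refine ⟨u - f u + f v, ?_, ?_⟩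
          · have := (hNsub.2 u huN v hvN).1
            rw [hact] at this
            exact this
          · show p • (u - f u + f v) = S.act x y
            rw [hact, smul_add, smul_sub, hsmulf, hsmulf, hu, hv]
        · refine ⟨f.symm v - f.symm u + u, ?_, ?_⟩
          · have := (hNsub.2 u huN v hvN).2
            rw [aff_ldiv] at this
            exact this
          · show p • (f.symm v - f.symm u + u) = S.ldiv x y
            rw [aff_ldiv, smul_add, smul_sub, hsmulfs, hsmulfs, hu, hv]
      have hpNN : pN ⊆ N := by
        rintro x ⟨z, hzN, rfl⟩
        exact hNsmul z hzN p
      have hpNnt : pN.Nontrivial := ⟨p • z1, ⟨z1, hz1N, rfl⟩, 0, ⟨0, hN0, smul_zero p⟩, hz1⟩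
      have hNpN : N ⊆ pN := subset_of_strictlySimple S hNsub hssN hpNsub hpNN hpNnt
      intro z hz
      obtain ⟨w, _, hw⟩ := hNpN hz
      show p • z = 0
      rw [← hw, smul_smul, ← pow_two]
      exact hp2 w
  have hP1N : P1 ⊆ N := subset_of_strictlySimple S hP1sub hss1 hNsub hNP1 hNnt
  have hNeq : ∀ z : A, z ∈ N ↔ p • z = 0 := fun z => ⟨fun h => hNP1 h, fun h => hP1N h⟩
  -- build the isomorphism
  have hmm : ∀ x : A, a + p • x ∈ {b | r a b} := by
    intro x
    have h1 : p • x ∈ N := (hNeq _).mpr (by rw [smul_smul, ← pow_two]; exact hp2 x)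
    have h2 := htrans r hr a (p • x) 0 h1
    rw [zero_add, add_comm (p • x) a] at h2
    exact hr.equiv.symm h2
  let tF : A → ↥{b | r a b} := fun x => ⟨a + p • x, hmm x⟩
  have hwd : ∀ x y : A, r x y → tF x = tF y := by
    intro x y h
    apply Subtype.ext
    have h1 : p • (x - y) = 0 := (hNeq _).mp ((hrN x y).mp h)
    rw [smul_sub, sub_eq_zero] at h1
    show a + p • x = a + p • y
    rw [h1]
  let e0 : Quotient hr.setoid → ↥{b | r a b} := Quotient.lift tF hwd
  have hinj : Function.Injective e0 := by
    intro x y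
    induction x using Quotient.ind with
    | _ x =>
    induction y using Quotient.ind with
    | _ y =>
    intro h
    apply Quotient.sound
    have hval : a + p • x = a + p • y := congrArg Subtype.val h
    have hpxy : p • x = p • y := add_left_cancel hval
    show r x y
    refine (hrN x y).mpr ((hNeq _).mpr ?_)
    rw [smul_sub, hpxy, sub_self]
  have hsurj : Function.Surjective e0 := by
    rintro ⟨b, hb⟩
    have h1 : r b a := hr.equiv.symm hb
    have h2 : b - a ∈ N := (hrN b a).mp h1
    obtain ⟨x, hx⟩ := hP12 ((hNeq _).mp h2 : p • (b - a) = 0)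
    refine ⟨Quotient.mk _ x, Subtype.ext ?_⟩
    show a + p • x = b
    rw [hx]
    abel
  refine ⟨Equiv.ofBijective e0 ⟨hinj, hsurj⟩, ?_⟩
  intro X Y
  induction X using Quotient.ind with
  | _ x =>
  induction Y using Quotient.ind with
  | _ y =>
  apply Subtype.ext
  show a + p • (S.act x y) = S.act (a + p • x) (a + p • y)
  rw [hact, hact, smul_add, smul_sub, map_add, map_add, hsmulf, hsmulf]
  abel
end
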